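/- Let α be a nonnegative random variable with finite expectation and continuous CDF F which is DMRL, let T ≥ 0, c ≥ 0, k = 3T + c, r_L = α_L − k, r_H = α_H − k, and assume r_H > 0. If E(α) − α_L > α_L − 3T − c (= r_L), then the unique solution r* ∈ (0, r_H) of the fixed point equation r = m(k + r) satisfies r* > max{r_L, 0}, i.e. r* ∈ (r_L⁺, r_H). -/

import Mathlib

open MeasureTheory Set Filter Topology ProbabilityTheory Function

/-- The mean residual lifetime function `m(t) = E[α − t ∣ α > t]` (with value `0` when
`P(α > t) = 0`, using the junk-value convention `x / 0 = 0`). -/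
noncomputable def mrl (μ : Measure ℝ) (t : ℝ) : ℝ :=
  (∫ x, max (x - t) 0 ∂μ) / (μ (Ioi t)).toReal

section helpers

lemma cdfCont (μ : Measure ℝ) [IsProbabilityMeasure μ] (hcont : ∀ t : ℝ, μ {t} = 0) :
    Continuous (cdf μ) := by
  rw [continuous_iff_continuousAt]
  intro x
  rw [(cdf μ).mono.continuousAt_iff_leftLim_eq_rightLim, (cdf μ).rightLim_eq]
  have h := (cdf μ).measure_singleton x
  rw [measure_cdf, hcont x, eq_comm, ENNReal.ofReal_eq_zero] at h
  have h2 : Function.leftLim (cdf μ) x ≤ cdf μ x := (cdf μ).mono.leftLim_le le_rfl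
  linarith

lemma Dcont (μ : Measure ℝ) [IsProbabilityMeasure μ] (hcont : ∀ t : ℝ, μ {t} = 0) :
    Continuous (fun t => (μ (Ioi t)).toReal) := by
  have : (fun t => (μ (Ioi t)).toReal) = fun t => 1 - cdf μ t := by
    ext t
    rw [cdf_eq_real, measureReal_def, ← compl_Iic, prob_compl_eq_one_sub measurableSet_Iic,
      ENNReal.toReal_sub_of_le prob_le_one (by simp), ENNReal.toReal_one]
  rw [this]
  exact continuous_const.sub (cdfCont μ hcont)


lemma Nint (μ : Measure ℝ) [IsProbabilityMeasure μ] (hint : Integrable id μ) (t : ℝ) :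
    Integrable (fun x => max (x - t) 0) μ :=
  (hint.sub (integrable_const t)).pos_part

lemma Ncont (μ : Measure ℝ) [IsProbabilityMeasure μ] (hint : Integrable id μ) :
    Continuous (fun t => ∫ x, max (x - t) 0 ∂μ) := by
  have : LipschitzWith 1 (fun t => ∫ x, max (x - t) 0 ∂μ) := by
    apply LipschitzWith.of_dist_le_mul
    intro s t
    rw [Real.dist_eq, Real.dist_eq, ← integral_sub (Nint μ hint s) (Nint μ hint t)]
    calc |∫ x, (max (x - s) 0 - max (x - t) 0) ∂μ|
        ≤ ∫ x, |max (x - s) 0 - max (x - t) 0| ∂μ := by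
          simpa using norm_integral_le_integral_norm (fun x => max (x - s) 0 - max (x - t) 0)
      _ ≤ ∫ _x, |s - t| ∂μ := by
          apply integral_mono ((Nint μ hint s).sub (Nint μ hint t)).abs (integrable_const _)
          intro x
          have := abs_max_sub_max_le_abs (x - s) (x - t) 0
          simpa [abs_sub_comm s t, sub_sub_sub_cancel_left] using this
      _ = 1 * |s - t| := by simp
  exact this.continuous

lemma Npos (μ : Measure ℝ) [IsProbabilityMeasure μ] (hint : Integrable id μ) (t : ℝ)
    (h : 0 < μ (Ioi t)) : 0 < ∫ x, max (x - t) 0 ∂μ := by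
  rw [integral_pos_iff_support_of_nonneg (f := fun x => max (x - t) 0) (fun x => le_max_right _ _) (Nint μ hint t)]
  have : (Function.support fun x => max (x - t) 0) = Ioi t := by
    ext x
    simp only [Function.mem_support, mem_Ioi, ne_eq]
    constructor
    · intro h1
      by_contra h2
      exact h1 (max_eq_right (by linarith [not_lt.mp h2]))
    · intro h1
      have : max (x - t) 0 = x - t := max_eq_left (by linarith)
      rw [this]; intro h2; linarith
  rwa [this]

-- positivity of measure of Ioi below essSup
lemma IoiPos (μ : Measure ℝ) [IsProbabilityMeasure μ] (t : ℝ)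
    (h : (t : EReal) < essSup (fun x : ℝ => (x : EReal)) μ) : 0 < μ (Ioi t) := by
  by_contra h0
  push_neg at h0
  have h0 : μ (Ioi t) = 0 := le_antisymm h0 zero_le
  have hae : ∀ᵐ x : ℝ ∂μ, ((x : EReal) ≤ (t : EReal)) := by
    rw [ae_iff]
    have : {x : ℝ | ¬ ((x : EReal) ≤ (t : EReal))} = Ioi t := by
      ext x; simp [EReal.coe_le_coe_iff, not_le]
    rwa [this]
  exact absurd (essSup_le_of_ae_le _ hae) (not_le.mpr h)

lemma mrlAtInf (μ : Measure ℝ) [IsProbabilityMeasure μ] (hint : Integrable id μ)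
    (hcont : ∀ t : ℝ, μ {t} = 0) (αL : ℝ)
    (hαL : essInf (fun x : ℝ => (x : EReal)) μ = (αL : EReal)) :
    mrl μ αL = (∫ x, x ∂μ) - αL := by
  have hae : ∀ᵐ x : ℝ ∂μ, αL ≤ x := by
    have h := ae_essInf_le (f := fun x : ℝ => (x : EReal)) (μ := μ)
    rw [hαL] at h
    filter_upwards [h] with x hx using EReal.coe_le_coe_iff.mp hx
  have hIio : μ (Iio αL) = 0 := by
    have : Iio αL = {x : ℝ | ¬ (αL ≤ x)} := by ext x; simp
    rw [this, ← ae_iff]; exact hae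
  have hIoi1 : μ (Ioi αL) = 1 := by
    have h1 : μ (Ici αL) = 1 := by
      rw [← compl_Iio, prob_compl_eq_one_sub measurableSet_Iio, hIio]; simp
    have h2 : (1 : ENNReal) ≤ μ (Ioi αL) + μ {αL} := by
      calc (1 : ENNReal) = μ (Ici αL) := h1.symm
        _ ≤ μ (Ioi αL ∪ {αL}) := by
            apply measure_mono; intro x hx
            rcases lt_or_eq_of_le (mem_Ici.mp hx) with h | h
            · exact Or.inl h
            · exact Or.inr (by simp [h.symm])
        _ ≤ μ (Ioi αL) + μ {αL} := measure_union_le _ _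
    rw [hcont αL, add_zero] at h2
    exact le_antisymm prob_le_one h2
  have hN : ∫ x, max (x - αL) 0 ∂μ = (∫ x, x ∂μ) - αL := by
    have h1 : ∫ x, max (x - αL) 0 ∂μ = ∫ x, x - αL ∂μ := by
      apply integral_congr_ae
      filter_upwards [hae] with x hx using max_eq_left (by linarith)
    rw [h1, integral_sub (by exact hint) (integrable_const αL), integral_const]
    simp
  rw [mrl, hN, hIoi1]
  simp

lemma mrlBound (μ : Measure ℝ) [IsProbabilityMeasure μ] (hint : Integrable id μ)
    (s t : ℝ) (hts : t ≤ s) (hae : ∀ᵐ x : ℝ ∂μ, x ≤ s) (hpos : 0 < μ (Ioi t)) :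
    mrl μ t ≤ s - t := by
  have hD : 0 < (μ (Ioi t)).toReal :=
    ENNReal.toReal_pos hpos.ne' (measure_ne_top μ _)
  rw [mrl, div_le_iff₀ hD]
  have hb : ∀ᵐ x : ℝ ∂μ, max (x - t) 0 ≤ Set.indicator (Ioi t) (fun _ => s - t) x := by
    filter_upwards [hae] with x hx
    by_cases h : t < x
    · rw [Set.indicator_of_mem (mem_Ioi.mpr h)]
      exact max_le (by linarith) (by linarith)
    · rw [Set.indicator_of_notMem (by simpa using h)]
      exact max_le (by push_neg at h; linarith) le_rfl
  calc ∫ x, max (x - t) 0 ∂μ ≤ ∫ x, Set.indicator (Ioi t) (fun _ => s - t) x ∂μ :=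
        integral_mono_ae (Nint μ hint t)
          ((integrable_const (s - t)).indicator measurableSet_Ioi) hb
    _ = (s - t) * (μ (Ioi t)).toReal := by
        rw [integral_indicator_const _ measurableSet_Ioi]; ring_nf; rw [measureReal_def]

end helpers

/-- Under DMRL, if `E(α) − α_L > r_L = α_L − 3T − c`, then the unique
solution `r* ∈ (0, r_H)` of `r = m(k + r)` satisfies `r* > max{r_L, 0}`, i.e.
`r* ∈ (r_L⁺, r_H)`. -/
theorem stmt12 (μ : Measure ℝ) [IsProbabilityMeasure μ]
    (hnonneg : μ (Iio 0) = 0) (hint : Integrable id μ) (hcont : ∀ t : ℝ, μ {t} = 0)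
    (hdmrl : Antitone (mrl μ))
    (T c : ℝ) (hT : 0 ≤ T) (hc : 0 ≤ c) (k : ℝ) (hk : k = 3*T + c)
    (αL : ℝ) (hαL : essInf (fun x : ℝ => (x : EReal)) μ = (αL : EReal))
    (rH : EReal) (hrH : rH = essSup (fun x : ℝ => (x : EReal)) μ - (k : EReal))
    (hrHpos : 0 < rH)
    (hcond : αL - k < (∫ x, x ∂μ) - αL) :
    ∃ rstar : ℝ, (0 < rstar ∧ (rstar : EReal) < rH) ∧ rstar = mrl μ (k + rstar) ∧
      (∀ r : ℝ, 0 < r → (r : EReal) < rH → r = mrl μ (k + r) → r = rstar) ∧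
      max (αL - k) 0 < rstar := by
  set S := essSup (fun x : ℝ => (x : EReal)) μ with hS
  have hkS : (k : EReal) < S := by
    have h := hrHpos; rw [hrH] at h
    have := EReal.add_lt_of_lt_sub h
    simpa using this
  have hDposk : 0 < μ (Ioi k) := IoiPos μ k hkS
  have hmrlk : 0 < mrl μ k :=
    div_pos (Npos μ hint k hDposk) (ENNReal.toReal_pos hDposk.ne' (measure_ne_top μ _))
  -- choose r0 with g r0 < 0
  obtain ⟨r0, hr0pos, hr0H, hgr0⟩ :
      ∃ r0 : ℝ, 0 < r0 ∧ (r0 : EReal) < rH ∧ mrl μ (k + r0) < r0 := by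
    by_cases hStop : S = ⊤
    · refine ⟨mrl μ k + 1, by linarith, ?_, ?_⟩
      · rw [hrH, hStop, EReal.top_sub_coe]
        exact EReal.coe_lt_top _
      · have := hdmrl (show k ≤ k + (mrl μ k + 1) by linarith)
        linarith
    · have hSbot : S ≠ ⊥ := fun h => by simp [h] at hkS
      set s := S.toReal with hs
      have hsS : (s : EReal) = S := EReal.coe_toReal hStop hSbot
      have hks : k < s := by rwa [← hsS, EReal.coe_lt_coe_iff] at hkS
      refine ⟨(s - k) * (3/4), by linarith, ?_, ?_⟩
      · rw [hrH, ← hsS, ← EReal.coe_sub, EReal.coe_lt_coe_iff]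
        linarith
      · have hae : ∀ᵐ x : ℝ ∂μ, x ≤ s := by
          have h := ae_le_essSup (f := fun x : ℝ => (x : EReal)) (μ := μ)
          rw [← hS, ← hsS] at h
          filter_upwards [h] with x hx using EReal.coe_le_coe_iff.mp hx
        have hpos : 0 < μ (Ioi (k + (s - k) * (3/4))) := by
          apply IoiPos
          rw [← hS, ← hsS, EReal.coe_lt_coe_iff]; linarith
        have := mrlBound μ hint s (k + (s - k) * (3/4)) (by linarith) hae hpos
        linarith
  -- the interval [0, r0] is below S
  have hkr0S : ((k + r0 : ℝ) : EReal) < S := by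
    have h := hr0H; rw [hrH] at h
    have := EReal.add_lt_of_lt_sub h
    rw [EReal.coe_add]
    rw [add_comm] at this
    exact_mod_cast this
  have key : ∀ r ∈ Icc (0:ℝ) r0, 0 < (μ (Ioi (k + r))).toReal := by
    intro r hr
    refine ENNReal.toReal_pos (IoiPos μ _ ?_).ne' (measure_ne_top μ _)
    calc ((k + r : ℝ) : EReal) ≤ ((k + r0 : ℝ) : EReal) := by
          rw [EReal.coe_le_coe_iff]; linarith [hr.2]
      _ < S := hkr0S
  -- continuity on [0, r0]
  have hg : ContinuousOn (fun r => mrl μ (k + r) - r) (Icc 0 r0) := by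
    apply ContinuousOn.sub _ continuousOn_id
    have : (fun r => mrl μ (k + r)) =
        fun r => (∫ x, max (x - (k + r)) 0 ∂μ) / (μ (Ioi (k + r))).toReal := rfl
    rw [this]
    apply ContinuousOn.div
    · exact ((Ncont μ hint).comp (continuous_const.add continuous_id)).continuousOn
    · exact ((Dcont μ hcont).comp (continuous_const.add continuous_id)).continuousOn
    · intro r hr; exact (key r hr).ne'
  have hIVT := intermediate_value_Icc' hr0pos.le hg
  have h0mem : (0 : ℝ) ∈ Icc (mrl μ (k + r0) - r0) (mrl μ (k + 0) - 0) := by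
    constructor
    · linarith
    · simp only [add_zero, sub_zero]; linarith
  obtain ⟨rstar, hrmem, hrfix0⟩ := hIVT h0mem
  have hrfix : rstar = mrl μ (k + rstar) := by
    have := hrfix0; simp only at this; linarith
  have hrpos : 0 < rstar := by
    rcases lt_or_eq_of_le hrmem.1 with h | h
    · exact h
    · exfalso
      rw [← h, add_zero] at hrfix
      linarith
  have hrltH : (rstar : EReal) < rH :=
    lt_of_le_of_lt (EReal.coe_le_coe_iff.mpr hrmem.2) hr0H
  refine ⟨rstar, ⟨hrpos, hrltH⟩, hrfix, ?_, ?_⟩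
  · intro r hr hrH' hfix
    rcases lt_trichotomy r rstar with h | h | h
    · have := hdmrl (show k + r ≤ k + rstar by linarith)
      rw [← hfix, ← hrfix] at this
      linarith
    · exact h
    · have := hdmrl (show k + rstar ≤ k + r by linarith)
      rw [← hfix, ← hrfix] at this
      linarith
  · apply max_lt _ hrpos
    by_contra h
    push_neg at h
    have h1 := hdmrl (show k + rstar ≤ αL by linarith)
    rw [mrlAtInf μ hint hcont αL hαL, ← hrfix] at h1
    linarith
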